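/- Let X be the dual of a separable Banach space Y, j : X → (-∞,∞] proper, x ∈ dom(j), g ∈ ∂j(x). If j is strictly twice epi-differentiable at x for g (recovery sequences zₙ →* z with ‖zₙ‖ → ‖z‖ exist for all z and all tₙ ↘ 0), then the second subderivative Q_j^{x,g} is sequentially weak-* lower semicontinuous: z_k →* z implies liminf_k Q_j^{x,g}(z_k) ≥ Q_j^{x,g}(z). -/

import Mathlib

open Filter Topology

variable {Y : Type*} [NormedAddCommGroup Y] [NormedSpace ℝ Y] [CompleteSpace Y]

/-- Second-order difference quotient of `j` at `x` for `g` with step `t` and direction `w`. -/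
noncomputable def secondQuot (j : StrongDual ℝ Y → EReal) (x : StrongDual ℝ Y)
    (g : Y) (t : ℝ) (w : StrongDual ℝ Y) : EReal :=
  ((2 / t ^ 2 : ℝ) : EReal) * (j (x + t • w) - j x - ((t * w g : ℝ) : EReal))

/-- Weak-* convergence of a sequence in the dual of `Y`. -/
def WeakStarTendsto (z : ℕ → StrongDual ℝ Y) (z₀ : StrongDual ℝ Y) : Prop :=
  ∀ y : Y, Tendsto (fun n => z n y) atTop (nhds (z₀ y))

/-- The weak-* second subderivative of `j` at `x` for `g`. -/
noncomputable def Qsub (j : StrongDual ℝ Y → EReal) (x : StrongDual ℝ Y) (g : Y)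
    (z : StrongDual ℝ Y) : EReal :=
  sInf { L | ∃ (t : ℕ → ℝ) (zs : ℕ → StrongDual ℝ Y),
      (∀ n, 0 < t n) ∧ Tendsto t atTop (nhds 0) ∧ WeakStarTendsto zs z ∧
      L = Filter.liminf (fun n => secondQuot j x g (t n) (zs n)) atTop }

/-- if `Y` is separable and `j` is strictly twice epi-differentiable at `x`
for `g ∈ ∂j(x)`, then the second subderivative is sequentially weak-* lower semicontinuous. -/
theorem Qsub_weakStar_seq_lsc [TopologicalSpace.SeparableSpace Y]
    (j : StrongDual ℝ Y → EReal)
    (hbot : ∀ u, j u ≠ ⊥) (hproper : ∃ u, j u ≠ ⊤)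
    (x : StrongDual ℝ Y) (hx : j x ≠ ⊤) (g : Y)
    (hg : ∀ z : StrongDual ℝ Y, j x + (((z - x) g : ℝ) : EReal) ≤ j z)
    (hepi : ∀ z : StrongDual ℝ Y, ∀ t : ℕ → ℝ, (∀ n, 0 < t n) →
      Tendsto t atTop (nhds 0) →
      ∃ zs : ℕ → StrongDual ℝ Y, WeakStarTendsto zs z ∧
        Tendsto (fun n => ‖zs n‖) atTop (nhds ‖z‖) ∧
        Tendsto (fun n => secondQuot j x g (t n) (zs n)) atTop (nhds (Qsub j x g z))) :
    ∀ (z : StrongDual ℝ Y) (zk : ℕ → StrongDual ℝ Y),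
      WeakStarTendsto zk z →
      Qsub j x g z ≤ Filter.liminf (fun k => Qsub j x g (zk k)) atTop := by
  intro z zk hzk
  -- step sizes
  set t : ℕ → ℝ := fun n => 1 / (n + 1) with ht
  have ht0 : ∀ n : ℕ, 0 < t n := fun n => by positivity
  have htlim : Tendsto t atTop (nhds 0) := tendsto_one_div_add_atTop_nhds_zero_nat
  -- recovery sequences for each `zk k`
  choose zs hws hnorm hquot using fun k => hepi (zk k) t ht0 htlim
  -- dense sequence in Y
  obtain ⟨e, he⟩ := TopologicalSpace.exists_dense_seq Y
  -- uniform bound on ‖zk k‖ via Banach–Steinhaus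
  have hbdd : ∀ y : Y, ∃ C, ∀ k : ℕ, ‖zk k y‖ ≤ C := by
    intro y
    obtain ⟨C, hC⟩ := ((hzk y).norm).bddAbove_range
    exact ⟨C, fun k => hC ⟨k, rfl⟩⟩
  obtain ⟨C, hC⟩ := banach_steinhaus hbdd
  have hC0 : (0 : ℝ) ≤ C := (norm_nonneg _).trans (hC 0)
  -- enumeration of the rationals
  set q : ℕ → ℚ := fun i => (Denumerable.eqv ℚ).symm i with hq
  -- diagonal choice
  have hex : ∀ k : ℕ, ∃ n : ℕ, k ≤ n ∧
      (∀ i ≤ k, dist (zs k n (e i)) (zk k (e i)) < 1 / (k + 1)) ∧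
      ‖zs k n‖ ≤ ‖zk k‖ + 1 ∧
      ∀ i ≤ k, Qsub j x g (zk k) < ((q i : ℝ) : EReal) →
        secondQuot j x g (t n) (zs k n) < ((q i : ℝ) : EReal) := by
    intro k
    have h1 : ∀ᶠ n in atTop, ∀ i ≤ k, dist (zs k n (e i)) (zk k (e i)) < 1 / (k + 1) := by
      have : ∀ᶠ n in atTop, ∀ i ∈ Finset.range (k + 1),
          dist (zs k n (e i)) (zk k (e i)) < 1 / (k + 1) := by
        rw [eventually_all_finset]
        intro i _
        have hε : (0 : ℝ) < 1 / (k + 1) := by positivity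
        have hp : ∀ᶠ v in nhds ((zk k) (e i)), dist v ((zk k) (e i)) < 1 / (k + 1) :=
          Metric.ball_mem_nhds _ hε
        exact (hws k (e i)).eventually hp
      exact this.mono fun n hn i hik => hn i (Finset.mem_range.2 (Nat.lt_succ_of_le hik))
    have h2 : ∀ᶠ n in atTop, ‖zs k n‖ ≤ ‖zk k‖ + 1 :=
      (hnorm k).eventually_le_const (lt_add_one _)
    have h3 : ∀ᶠ n in atTop, ∀ i ≤ k, Qsub j x g (zk k) < ((q i : ℝ) : EReal) →
        secondQuot j x g (t n) (zs k n) < ((q i : ℝ) : EReal) := by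
      have : ∀ᶠ n in atTop, ∀ i ∈ Finset.range (k + 1),
          Qsub j x g (zk k) < ((q i : ℝ) : EReal) →
          secondQuot j x g (t n) (zs k n) < ((q i : ℝ) : EReal) := by
        rw [eventually_all_finset]
        intro i _
        by_cases hlt : Qsub j x g (zk k) < ((q i : ℝ) : EReal)
        · exact ((hquot k).eventually_lt_const hlt).mono fun n hn _ => hn
        · exact Eventually.of_forall fun n h' => absurd h' hlt
      exact this.mono fun n hn i hik => hn i (Finset.mem_range.2 (Nat.lt_succ_of_le hik))
    exact (((h1.and h2).and h3).and (eventually_ge_atTop k)).exists.imp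
      fun n ⟨⟨⟨a, b⟩, c⟩, d⟩ => ⟨d, a, b, c⟩
  choose N hN1 hN2 hN3 hN4 using hex
  have hNtop : Tendsto N atTop atTop := tendsto_atTop_mono hN1 tendsto_id
  -- the diagonal sequence converges weak-* to z
  have hwz : WeakStarTendsto (fun k => zs k (N k)) z := by
    intro y
    rw [Metric.tendsto_atTop]
    intro ε hε
    set M : ℝ := C + 1 with hM
    have hpos : (0 : ℝ) < M + ‖z‖ + 1 := by positivity
    set δ : ℝ := ε / 4 / (M + ‖z‖ + 1) with hδdef
    have hδ : 0 < δ := by positivity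
    have hδeq : δ * (M + ‖z‖ + 1) = ε / 4 := div_mul_cancel₀ _ (ne_of_gt hpos)
    obtain ⟨i, hi⟩ := he.exists_dist_lt y hδ
    have hyei : ‖y - e i‖ < δ := by rwa [dist_eq_norm] at hi
    obtain ⟨K1, hK1⟩ : ∃ K1 : ℕ, (1 : ℝ) / (K1 + 1) < ε / 4 :=
      exists_nat_one_div_lt (by positivity)
    have h3 : ∀ᶠ k in atTop, dist (zk k (e i)) (z (e i)) < ε / 4 := by
      have hp : ∀ᶠ v in nhds (z (e i)), dist v (z (e i)) < ε / 4 :=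
        Metric.ball_mem_nhds _ (by positivity : (0:ℝ) < ε / 4)
      exact (hzk (e i)).eventually hp
    have hall : ∀ᶠ k in atTop, dist (zs k (N k) y) (z y) < ε := by
      filter_upwards [h3, eventually_ge_atTop i, eventually_ge_atTop K1] with k h3k hik hKk
      show dist (zs k (N k) y) (z y) < ε
      have h2k : dist (zs k (N k) (e i)) (zk k (e i)) < ε / 4 := by
        refine lt_of_lt_of_le (hN2 k i hik) (le_trans ?_ hK1.le)
        apply one_div_le_one_div_of_le (by positivity)
        have : (K1 : ℝ) ≤ (k : ℝ) := Nat.cast_le.2 hKk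
        linarith
      have hbk : ‖zs k (N k)‖ ≤ M := by
        have := hC k
        have := hN3 k
        rw [hM]; linarith
      have t1 : dist (zs k (N k) y) (zs k (N k) (e i)) ≤ M * δ := by
        rw [dist_eq_norm, ← map_sub]
        calc ‖zs k (N k) (y - e i)‖ ≤ ‖zs k (N k)‖ * ‖y - e i‖ :=
              (zs k (N k)).le_opNorm _
          _ ≤ M * δ := by
              apply mul_le_mul hbk hyei.le (norm_nonneg _) (by positivity)
      have t4 : dist (z (e i)) (z y) ≤ ‖z‖ * δ := by
        rw [dist_comm, dist_eq_norm, ← map_sub]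
        calc ‖z (y - e i)‖ ≤ ‖z‖ * ‖y - e i‖ := z.le_opNorm _
          _ ≤ ‖z‖ * δ := mul_le_mul_of_nonneg_left hyei.le (norm_nonneg _)
      have tri : dist (zs k (N k) y) (z y) ≤
          dist (zs k (N k) y) (zs k (N k) (e i)) + (dist (zs k (N k) (e i)) (zk k (e i)) +
            dist (zk k (e i)) (z (e i)) + dist (z (e i)) (z y)) :=
        (dist_triangle _ (zs k (N k) (e i)) _).trans
          (by gcongr; exact dist_triangle4 _ _ _ _)
      have hMz : M * δ + ‖z‖ * δ ≤ ε / 4 := by nlinarith [hδ.le, hδeq]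
      calc dist (zs k (N k) y) (z y)
          ≤ M * δ + (ε/4 + ε/4 + ‖z‖ * δ) :=
            tri.trans (add_le_add t1 (add_le_add (add_le_add h2k.le h3k.le) t4))
        _ = (M * δ + ‖z‖ * δ) + ε/2 := by ring
        _ ≤ ε/4 + ε/2 := add_le_add_left hMz _
        _ < ε := by linarith
    exact hall.exists_forall_of_atTop
  -- the diagonal sequence is admissible for z
  have hmem : Filter.liminf (fun k => secondQuot j x g (t (N k)) (zs k (N k))) atTop ∈
      { L | ∃ (t' : ℕ → ℝ) (zs' : ℕ → StrongDual ℝ Y),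
        (∀ n, 0 < t' n) ∧ Tendsto t' atTop (nhds 0) ∧ WeakStarTendsto zs' z ∧
        L = Filter.liminf (fun n => secondQuot j x g (t' n) (zs' n)) atTop } :=
    ⟨fun k => t (N k), fun k => zs k (N k), fun k => ht0 (N k), htlim.comp hNtop, hwz, rfl⟩
  refine le_trans (sInf_le hmem) ?_
  -- the liminf of the diagonal quotients is below the liminf of the second subderivatives
  refine le_of_forall_gt_imp_ge_of_dense fun b hb => ?_
  obtain ⟨r, hLr, hrb⟩ := EReal.exists_rat_btwn_of_lt hb
  have hfr : ∃ᶠ k in atTop, Qsub j x g (zk k) < ((r : ℝ) : EReal) :=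
    frequently_lt_of_liminf_lt (by isBoundedDefault) hLr
  set i₀ : ℕ := Denumerable.eqv ℚ r with hi₀
  have hqi : q i₀ = r := Equiv.symm_apply_apply _ _
  have hfreq : ∃ᶠ k in atTop,
      secondQuot j x g (t (N k)) (zs k (N k)) ≤ ((r : ℝ) : EReal) := by
    refine (hfr.and_eventually (eventually_ge_atTop i₀)).mono ?_
    rintro k ⟨hk1, hk2⟩
    have := hN4 k i₀ hk2 (by rw [hqi]; exact hk1)
    rw [hqi] at this
    exact this.le
  exact (liminf_le_of_frequently_le' hfreq).trans hrb.le
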